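/- (Yonaha) Let G be a finite metabelian group (i.e., the commutator subgroup G' is abelian) with Z(G) ∩ G' = 1. Then the commutator subgroup G' has a complement in G, and any two complements of G' in G are conjugate in G. -/

import Mathlib

open Pointwise
open scoped IsMulCommutative commutatorElement

/-- `K` is a complement of `N` inside the subgroup `H` of `G`:
`K ≤ H`, `K ∩ N = 1` and `KN = H` (as sets). -/
def IsComplementOfIn {G : Type*} [Group G] (K N H : Subgroup G) : Prop :=
  K ≤ H ∧ K ⊓ N = ⊥ ∧ (K : Set G) * (N : Set G) = (H : Set G)
def HasComplementIn {G : Type*} [Group G] (N H : Subgroup G) : Prop :=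
  ∃ K : Subgroup G, IsComplementOfIn K N H

namespace YonahaAux

variable {G : Type*} [Group G]

/-- A (right) crossed homomorphism on the subgroup `W`. -/
def IsCocycle (f : G → G) (W : Subgroup G) : Prop :=
  ∀ x ∈ W, ∀ y ∈ W, f (x * y) = y⁻¹ * f x * y * f y

theorem acomm (hmeta : IsMulCommutative (commutator G)) {x y : G}
    (hx : x ∈ commutator G) (hy : y ∈ commutator G) : x * y = y * x := by
  haveI := hmeta
  exact Subgroup.mul_comm_of_mem_isMulCommutative _ hx hy

theorem aconj {V : Subgroup G} (hVn : V.Normal) {x : G} (hx : x ∈ V) (y : G) :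
    y⁻¹ * x * y ∈ V :=
  hVn.conj_mem' x hx y

theorem conj_pow' (y w : G) (n : ℕ) : (y⁻¹ * w * y) ^ n = y⁻¹ * w ^ n * y := by
  induction n with
  | zero => group
  | succ n ih => rw [pow_succ, pow_succ, ih]; group

theorem cocycle_one {f : G → G} {W : Subgroup G} (hf : IsCocycle f W) : f 1 = 1 := by
  have := hf 1 W.one_mem 1 W.one_mem
  simpa using this

theorem cocycle_inv {f : G → G} {W : Subgroup G} (hf : IsCocycle f W) {x : G} (hx : x ∈ W) :
    f x⁻¹ = x * (f x)⁻¹ * x⁻¹ := by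
  have h := hf x⁻¹ (W.inv_mem hx) x hx
  rw [inv_mul_cancel, cocycle_one hf] at h
  have h' : x⁻¹ * f x⁻¹ * x * f x = 1 := h.symm
  calc f x⁻¹ = x * (x⁻¹ * f x⁻¹ * x * f x) * (f x)⁻¹ * x⁻¹ := by group
  _ = x * 1 * (f x)⁻¹ * x⁻¹ := by rw [h']
  _ = x * (f x)⁻¹ * x⁻¹ := by group

theorem cocycle_mul (hmeta : IsMulCommutative (commutator G)) {f₁ f₂ : G → G} {W : Subgroup G}
    (h₁ : IsCocycle f₁ W) (h₂ : IsCocycle f₂ W)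
    (hv₁ : ∀ w ∈ W, f₁ w ∈ commutator G) (hv₂ : ∀ w ∈ W, f₂ w ∈ commutator G) :
    IsCocycle (fun g => f₁ g * f₂ g) W := by
  intro x hx y hy
  simp only []
  rw [h₁ x hx y hy, h₂ x hx y hy]
  have hc : (f₁ y) * (y⁻¹ * f₂ x * y) = (y⁻¹ * f₂ x * y) * (f₁ y) :=
    acomm hmeta (hv₁ y hy) (aconj (Subgroup.commutator_normal ⊤ ⊤) (hv₂ x hx) y)
  calc y⁻¹ * f₁ x * y * f₁ y * (y⁻¹ * f₂ x * y * f₂ y)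
      = y⁻¹ * f₁ x * y * (f₁ y * (y⁻¹ * f₂ x * y)) * f₂ y := by group
    _ = y⁻¹ * f₁ x * y * ((y⁻¹ * f₂ x * y) * f₁ y) * f₂ y := by rw [hc]
    _ = y⁻¹ * (f₁ x * f₂ x) * y * (f₁ y * f₂ y) := by group

theorem cocycle_kappa (b : G) : IsCocycle (fun g => g⁻¹ * b⁻¹ * g * b) ⊤ := by
  intro x _ y _
  group

theorem cocycle_inv_fun (hmeta : IsMulCommutative (commutator G)) {f : G → G} {W : Subgroup G}
    (h : IsCocycle f W) (hv : ∀ w ∈ W, f w ∈ commutator G) :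
    IsCocycle (fun g => (f g)⁻¹) W := by
  intro x hx y hy
  simp only []
  rw [h x hx y hy]
  have hc : (f y)⁻¹ * (y⁻¹ * (f x)⁻¹ * y) = (y⁻¹ * (f x)⁻¹ * y) * (f y)⁻¹ :=
    acomm hmeta ((commutator G).inv_mem (hv y hy))
      (aconj (Subgroup.commutator_normal ⊤ ⊤) ((commutator G).inv_mem (hv x hx)) y)
  calc (y⁻¹ * f x * y * f y)⁻¹ = (f y)⁻¹ * (y⁻¹ * (f x)⁻¹ * y) := by group
    _ = (y⁻¹ * (f x)⁻¹ * y) * (f y)⁻¹ := hc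

theorem cocycle_pow (hmeta : IsMulCommutative (commutator G)) {f : G → G} {W : Subgroup G}
    (h : IsCocycle f W) (hv : ∀ w ∈ W, f w ∈ commutator G) (n : ℕ) :
    IsCocycle (fun g => (f g) ^ n) W := by
  intro x hx y hy
  simp only []
  rw [h x hx y hy]
  have hc : Commute (y⁻¹ * f x * y) (f y) :=
    (acomm hmeta (aconj (Subgroup.commutator_normal ⊤ ⊤) (hv x hx) y) (hv y hy))
  rw [hc.mul_pow, conj_pow']


/-- D1: from a complement to a crossed homomorphism. -/
theorem exists_fun_of_complement (hmeta : IsMulCommutative (commutator G))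
    {V W K : Subgroup G} (hVA : V ≤ commutator G) (hVn : V.Normal)
    (hc : IsComplementOfIn K V W) :
    ∃ f : G → G, IsCocycle f W ∧ (∀ w ∈ W, f w ∈ V) ∧ (∀ v ∈ V, f v = v) ∧
      (∀ w, w ∈ K ↔ w ∈ W ∧ f w = 1) := by
  obtain ⟨hKW, hKV, hprod⟩ := hc
  have hVW : V ≤ W := by
    intro v hv
    have : (1 : G) * v ∈ (K : Set G) * (V : Set G) :=
      Set.mul_mem_mul K.one_mem hv
    rw [hprod] at this
    simpa using this
  have hex : ∀ g ∈ W, ∃ v, v ∈ V ∧ g * v⁻¹ ∈ K := by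
    intro g hg
    have : g ∈ (K : Set G) * (V : Set G) := by rw [hprod]; exact hg
    obtain ⟨k, hk, v, hv, hkv⟩ := this
    exact ⟨v, hv, by rw [← hkv]; simpa using hk⟩
  have huniq : ∀ g v v', v ∈ V → g * v⁻¹ ∈ K → v' ∈ V → g * v'⁻¹ ∈ K → v = v' := by
    intro g v v' hv hkv hv' hkv'
    have hm : (g * v'⁻¹)⁻¹ * (g * v⁻¹) ∈ K := K.mul_mem (K.inv_mem hkv') hkv
    have he : (g * v'⁻¹)⁻¹ * (g * v⁻¹) = v' * v⁻¹ := by group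
    rw [he] at hm
    have : v' * v⁻¹ ∈ K ⊓ V := ⟨hm, V.mul_mem hv' (V.inv_mem hv)⟩
    rw [hKV] at this
    have : v' * v⁻¹ = 1 := this
    have := mul_inv_eq_one.mp this
    exact this.symm
  classical
  refine ⟨fun g => if hg : g ∈ W then (hex g hg).choose else 1, ?_, ?_, ?_, ?_⟩
  · -- cocycle
    intro x hx y hy
    have hxy : x * y ∈ W := W.mul_mem hx hy
    simp only [dif_pos hx, dif_pos hy, dif_pos hxy]
    obtain ⟨hv₁, hk₁⟩ := (hex x hx).choose_spec
    obtain ⟨hv₂, hk₂⟩ := (hex y hy).choose_spec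
    set v₁ := (hex x hx).choose
    set v₂ := (hex y hy).choose
    set k₂ := y * v₂⁻¹ with hk₂def
    -- x*y = (k₁ * k₂) * (k₂⁻¹ v₁ k₂ * v₂)
    have hmem : (k₂⁻¹ * v₁ * k₂) * v₂ ∈ V :=
      V.mul_mem (aconj hVn hv₁ k₂) hv₂
    have hK : (x * y) * ((k₂⁻¹ * v₁ * k₂) * v₂)⁻¹ ∈ K := by
      have : (x * y) * ((k₂⁻¹ * v₁ * k₂) * v₂)⁻¹ = (x * v₁⁻¹) * k₂ := by
        rw [hk₂def]; group
      rw [this]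
      exact K.mul_mem hk₁ hk₂
    have := huniq (x * y) _ _ (hex (x*y) hxy).choose_spec.1 (hex (x*y) hxy).choose_spec.2
      hmem hK
    rw [this]
    -- now show k₂⁻¹ v₁ k₂ * v₂ = y⁻¹ v₁ y * v₂ using commutativity
    have hcomm : v₂ * (y⁻¹ * v₁ * y) = (y⁻¹ * v₁ * y) * v₂ :=
      acomm hmeta (hVA hv₂) (hVA (aconj hVn hv₁ y))
    calc k₂⁻¹ * v₁ * k₂ * v₂ = v₂ * (y⁻¹ * v₁ * y) * v₂⁻¹ * v₂ := by rw [hk₂def]; group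
      _ = (y⁻¹ * v₁ * y) * v₂ * v₂⁻¹ * v₂ := by rw [hcomm]
      _ = y⁻¹ * v₁ * y * v₂ := by group
  · intro w hw
    simp only [dif_pos hw]
    exact (hex w hw).choose_spec.1
  · intro v hv
    simp only [dif_pos (hVW hv)]
    exact (huniq v _ v (hex v (hVW hv)).choose_spec.1 (hex v (hVW hv)).choose_spec.2
      hv (by simpa using K.one_mem))
  · intro w
    constructor
    · intro hwK
      have hw : w ∈ W := hKW hwK
      refine ⟨hw, ?_⟩
      simp only [dif_pos hw]
      exact huniq w _ 1 (hex w hw).choose_spec.1 (hex w hw).choose_spec.2 V.one_mem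
        (by simpa using hwK)
    · rintro ⟨hw, hfw⟩
      have := (hex w hw).choose_spec.2
      simp only [dif_pos hw] at hfw
      rw [hfw] at this
      simpa using this

/-- D2: from a crossed homomorphism to a complement. -/
theorem complement_of_fun (hmeta : IsMulCommutative (commutator G))
    {V W : Subgroup G} (hVA : V ≤ commutator G) (hVW : V ≤ W) (f : G → G)
    (hf : IsCocycle f W) (hfV : ∀ w ∈ W, f w ∈ V) (hfid : ∀ v ∈ V, f v = v) :
    ∃ K : Subgroup G, IsComplementOfIn K V W ∧ ∀ w, (w ∈ K ↔ w ∈ W ∧ f w = 1) := by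
  have hmul : ∀ a b : G, (a ∈ W ∧ f a = 1) → (b ∈ W ∧ f b = 1) → (a * b ∈ W ∧ f (a * b) = 1) := by
    rintro a b ⟨ha, hfa⟩ ⟨hb, hfb⟩
    refine ⟨W.mul_mem ha hb, ?_⟩
    rw [hf a ha b hb, hfa, hfb]; group
  have hinv : ∀ a : G, (a ∈ W ∧ f a = 1) → (a⁻¹ ∈ W ∧ f a⁻¹ = 1) := by
    rintro a ⟨ha, hfa⟩
    refine ⟨W.inv_mem ha, ?_⟩
    have h := hf a⁻¹ (W.inv_mem ha) a ha
    rw [inv_mul_cancel, cocycle_one hf, hfa, mul_one] at h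
    have h2 : a⁻¹ * f a⁻¹ * a = 1 := h.symm
    calc f a⁻¹ = a * (a⁻¹ * f a⁻¹ * a) * a⁻¹ := by group
      _ = a * 1 * a⁻¹ := by rw [h2]
      _ = 1 := by group
  refine ⟨{ carrier := setOf fun w => w ∈ W ∧ f w = 1
            one_mem' := ⟨W.one_mem, cocycle_one hf⟩
            mul_mem' := fun ha hb => hmul _ _ ha hb
            inv_mem' := fun ha => hinv _ ha }, ⟨?_, ?_, ?_⟩, fun w => Iff.rfl⟩
  · intro w hw; exact hw.1
  · -- K ⊓ V = ⊥
    rw [eq_bot_iff]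
    rintro x ⟨⟨_, hfx⟩, hxV⟩
    have : f x = x := hfid x hxV
    rw [hfx] at this
    simpa using this.symm
  · -- set product
    apply Set.Subset.antisymm
    · rintro _ ⟨k, hk, v, hv, rfl⟩
      exact W.mul_mem hk.1 (hVW hv)
    · intro w hw
      have hfw := hfV w hw
      refine ⟨w * (f w)⁻¹, ⟨W.mul_mem hw (W.inv_mem (hVW hfw)), ?_⟩, f w, hfw, by group⟩
      have h := hf w hw (f w)⁻¹ (W.inv_mem (hVW hfw))
      rw [hfid _ (V.inv_mem hfw)] at h
      rw [h]
      group

/-- D3: twisting a crossed hom by an inner derivation conjugates the kernel. -/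
theorem map_conj_ker (hmeta : IsMulCommutative (commutator G))
    {V W K₁ K₂ : Subgroup G} (hVA : V ≤ commutator G) (hVn : V.Normal) (hVW : V ≤ W)
    (f₁ f₂ : G → G) (hf₁ : IsCocycle f₁ W)
    (hid₁ : ∀ v ∈ V, f₁ v = v)
    (hK₁ : ∀ w, w ∈ K₁ ↔ w ∈ W ∧ f₁ w = 1) (hK₂ : ∀ w, w ∈ K₂ ↔ w ∈ W ∧ f₂ w = 1)
    {b : G} (hb : b ∈ V)
    (hrel : ∀ w ∈ W, f₂ w = f₁ w * (w⁻¹ * b⁻¹ * w * b)) :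
    Subgroup.map (MulAut.conj b).toMonoidHom K₁ = K₂ := by
  have hAn : (commutator G).Normal := Subgroup.commutator_normal ⊤ ⊤
  ext w
  simp only [Subgroup.mem_map, MulEquiv.coe_toMonoidHom, MulAut.conj_apply]
  constructor
  · rintro ⟨k, hk, rfl⟩
    obtain ⟨hkW, hfk⟩ := (hK₁ k).mp hk
    have hbW : b ∈ W := hVW hb
    have hwW : b * k * b⁻¹ ∈ W := by
      have := W.mul_mem (W.mul_mem hbW hkW) (W.inv_mem hbW)
      exact this
    rw [hK₂]
    refine ⟨hwW, ?_⟩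
    rw [hrel _ hwW]
    -- compute f₁ (b * k * b⁻¹)
    have e1 : f₁ (b * (k * b⁻¹)) = (k * b⁻¹)⁻¹ * f₁ b * (k * b⁻¹) * f₁ (k * b⁻¹) :=
      hf₁ b hbW (k * b⁻¹) (W.mul_mem hkW (W.inv_mem hbW))
    have e2 : f₁ (k * b⁻¹) = b * f₁ k * b⁻¹ * f₁ b⁻¹ := by
      have := hf₁ k hkW b⁻¹ (W.inv_mem hbW)
      simpa using this
    have hfb : f₁ b = b := hid₁ b hb
    have hfbi : f₁ b⁻¹ = b⁻¹ := hid₁ b⁻¹ (V.inv_mem hb)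
    have e3 : f₁ (b * k * b⁻¹) = (k * b⁻¹)⁻¹ * b * (k * b⁻¹) * b⁻¹ := by
      rw [mul_assoc b k b⁻¹, e1, e2, hfk, hfb, hfbi]; group
    rw [e3]
    -- goal : (k b⁻¹)⁻¹ b (k b⁻¹) b⁻¹ * ((b k b⁻¹)⁻¹ b⁻¹ (b k b⁻¹) b) = 1
    -- i.e. X b⁻¹ · b X⁻¹ = 1 with X = k⁻¹ b k  ... use commutativity in A
    have hXA : k⁻¹ * b * k ∈ commutator G := by
      have : k⁻¹ * b * k ∈ V := aconj hVn hb k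
      exact hVA this
    have hbA : b ∈ commutator G := hVA hb
    have hc : (k⁻¹ * b * k) * b⁻¹ = b⁻¹ * (k⁻¹ * b * k) :=
      acomm hmeta hXA ((commutator G).inv_mem hbA)
    calc (k * b⁻¹)⁻¹ * b * (k * b⁻¹) * b⁻¹ * ((b * k * b⁻¹)⁻¹ * b⁻¹ * (b * k * b⁻¹) * b)
        = b * ((k⁻¹ * b * k) * b⁻¹) * (k⁻¹ * b⁻¹ * k) := by group
      _ = b * (b⁻¹ * (k⁻¹ * b * k)) * (k⁻¹ * b⁻¹ * k) := by rw [hc]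
      _ = 1 := by group
  · intro hwK₂
    obtain ⟨hwW, hfw2⟩ := (hK₂ w).mp hwK₂
    have hbW : b ∈ W := hVW hb
    refine ⟨b⁻¹ * w * b, ?_, by group⟩
    have hkW : b⁻¹ * w * b ∈ W := W.mul_mem (W.mul_mem (W.inv_mem hbW) hwW) hbW
    rw [hK₁]
    refine ⟨hkW, ?_⟩
    -- from hrel : f₁ w = (w⁻¹ b⁻¹ w b)⁻¹ = b⁻¹ w⁻¹ b w
    have hfw1 : f₁ w = b⁻¹ * w⁻¹ * b * w := by
      have h := hrel w hwW
      rw [hfw2] at h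
      have h1 : f₁ w * (w⁻¹ * b⁻¹ * w * b) = 1 := by rw [← hrel w hwW]; exact hfw2
      have h2 : f₁ w = (w⁻¹ * b⁻¹ * w * b)⁻¹ := by
        rw [mul_eq_one_iff_eq_inv] at h1
        exact h1
      rw [h2]; group
    have e1 : f₁ (b⁻¹ * (w * b)) = (w * b)⁻¹ * f₁ b⁻¹ * (w * b) * f₁ (w * b) :=
      hf₁ b⁻¹ (W.inv_mem hbW) (w * b) (W.mul_mem hwW hbW)
    have e2 : f₁ (w * b) = b⁻¹ * f₁ w * b * f₁ b := hf₁ w hwW b hbW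
    have hfb : f₁ b = b := hid₁ b hb
    have hfbi : f₁ b⁻¹ = b⁻¹ := hid₁ b⁻¹ (V.inv_mem hb)
    have e3 : f₁ (b⁻¹ * w * b) =
        (w * b)⁻¹ * b⁻¹ * (w * b) * (b⁻¹ * (b⁻¹ * w⁻¹ * b * w) * b * b) := by
      rw [mul_assoc b⁻¹ w b, e1, e2, hfb, hfbi, hfw1]
    rw [e3]
    -- = Y · b⁻¹-stuff: use commutativity: Y := w⁻¹ b⁻¹ w, Z := w⁻¹ b w
    have hY : w⁻¹ * b⁻¹ * w ∈ commutator G := hVA (aconj hVn (V.inv_mem hb) w)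
    have hZ : w⁻¹ * b * w ∈ commutator G := hVA (aconj hVn hb w)
    have hbA : b ∈ commutator G := hVA hb
    have hc1 : (w⁻¹ * b⁻¹ * w) * b⁻¹ = b⁻¹ * (w⁻¹ * b⁻¹ * w) :=
      acomm hmeta hY ((commutator G).inv_mem hbA)
    calc (w * b)⁻¹ * b⁻¹ * (w * b) * (b⁻¹ * (b⁻¹ * w⁻¹ * b * w) * b * b)
        = b⁻¹ * ((w⁻¹ * b⁻¹ * w) * b⁻¹) * (w⁻¹ * b * w) * b * b := by group
      _ = b⁻¹ * (b⁻¹ * (w⁻¹ * b⁻¹ * w)) * (w⁻¹ * b * w) * b * b := by rw [hc1]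
      _ = 1 := by group

theorem avg_lemma [Finite G] (hmeta : IsMulCommutative (commutator G))
    {V H' : Subgroup G} (hVA : V ≤ commutator G) (hVn : V.Normal) (hVH : V ≤ H')
    (d : G → G) (hd : IsCocycle d H') (hdV : ∀ h ∈ H', d h ∈ V) (hd1 : ∀ v ∈ V, d v = 1) :
    ∃ a ∈ V, ∀ h ∈ H', (d h) ^ (Nat.card (↥H' ⧸ V.subgroupOf H')) = h⁻¹ * a⁻¹ * h * a := by
  classical
  haveI := hVn
  haveI := hmeta
  haveI : ((V.subgroupOf H') : Subgroup ↥H').Normal := Subgroup.normal_subgroupOf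
  haveI hAn : (commutator G).Normal := Subgroup.commutator_normal ⊤ ⊤
  haveI : Fintype (↥H' ⧸ V.subgroupOf H') := Fintype.ofFinite _
  set m := Nat.card (↥H' ⧸ V.subgroupOf H') with hm
  have hwd : ∀ x y : ↥H', @Setoid.r _ (QuotientGroup.leftRel (V.subgroupOf H')) x y →
      (⟨d ↑x, hVA (hdV _ x.2)⟩ : ↥(commutator G)) = ⟨d ↑y, hVA (hdV _ y.2)⟩ := by
    intro x y hxy
    rw [QuotientGroup.leftRel_apply] at hxy
    have hv : ((x⁻¹ * y : ↥H') : G) ∈ V := hxy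
    apply Subtype.ext
    show d ↑x = d ↑y
    have hyx : (y : G) = ↑x * ↑(x⁻¹ * y) := by push_cast; group
    rw [hyx, hd _ x.2 _ (hVH hv), hd1 _ hv, mul_one]
    have hc : (d ↑x) * ↑(x⁻¹ * y) = ↑(x⁻¹ * y) * (d ↑x) :=
      acomm hmeta (hVA (hdV _ x.2)) (hVA hv)
    symm
    calc (↑(x⁻¹ * y) : G)⁻¹ * d ↑x * ↑(x⁻¹ * y) = (↑(x⁻¹ * y) : G)⁻¹ * (d ↑x * ↑(x⁻¹ * y)) := by
          group
      _ = (↑(x⁻¹ * y) : G)⁻¹ * (↑(x⁻¹ * y) * d ↑x) := by rw [hc]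
      _ = d ↑x := by group
  let D : (↥H' ⧸ V.subgroupOf H') → ↥(commutator G) := fun q =>
    Quotient.liftOn' q (fun x : ↥H' => (⟨d ↑x, hVA (hdV _ x.2)⟩ : ↥(commutator G))) hwd
  have hDmk : ∀ x : ↥H', D (QuotientGroup.mk x) = ⟨d ↑x, hVA (hdV _ x.2)⟩ := fun x => rfl
  set a : ↥(commutator G) := ∏ q, D q with ha
  have haV : (a : G) ∈ V := by
    have : a ∈ V.subgroupOf (commutator G) := by
      rw [ha]
      apply Subgroup.prod_mem
      intro q _
      induction q using QuotientGroup.induction_on with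
      | H x =>
        rw [hDmk]
        show d ↑x ∈ V
        exact hdV _ x.2
    exact this
  refine ⟨a, haV, ?_⟩
  intro h hh
  set h' : ↥H' := ⟨h, hh⟩ with hh'
  set χ : MulAut ↥(commutator G) := MulAut.conjNormal (h⁻¹ : G) with hχ
  set δ : ↥(commutator G) := ⟨d h, hVA (hdV h hh)⟩ with hδ
  have key : ∀ q, D (q * QuotientGroup.mk h') = χ (D q) * δ := by
    intro q
    induction q using QuotientGroup.induction_on with
    | H x =>
      have hmul : (QuotientGroup.mk x) * (QuotientGroup.mk h') =
          (QuotientGroup.mk (x * h') : ↥H' ⧸ V.subgroupOf H') := rfl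
      rw [hmul, hDmk, hDmk]
      apply Subtype.ext
      show d (↑x * h) = _
      rw [hd _ x.2 _ hh]
      push_cast
      rw [hχ]
      simp only [MulAut.conjNormal_apply, hδ]
      group
  have step1 : a = χ a * δ ^ m := by
    have e1 : ∏ q, D (q * QuotientGroup.mk h') = a := by
      rw [ha]
      exact Equiv.prod_comp (Equiv.mulRight (QuotientGroup.mk h')) D
    have e2 : ∏ q, D (q * QuotientGroup.mk h') = χ a * δ ^ m := by
      calc ∏ q, D (q * QuotientGroup.mk h') = ∏ q, (χ (D q) * δ) := by
            exact Finset.prod_congr rfl (fun q _ => key q)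
        _ = (∏ q, χ (D q)) * ∏ _q : (↥H' ⧸ V.subgroupOf H'), δ := Finset.prod_mul_distrib
        _ = χ a * δ ^ m := by
            rw [ha, ← map_prod χ D Finset.univ, Finset.prod_const, hm,
              Nat.card_eq_fintype_card, Finset.card_univ]
    exact e1.symm.trans e2
  have step2 : (a : G) = h⁻¹ * ↑a * h * (d h) ^ m := by
    conv_lhs => rw [step1]
    push_cast
    rw [hχ]
    simp only [MulAut.conjNormal_apply, hδ]
    group
  calc (d h) ^ m = (h⁻¹ * ↑a * h)⁻¹ * (h⁻¹ * ↑a * h * (d h) ^ m) := by group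
    _ = (h⁻¹ * ↑a * h)⁻¹ * ↑a := by rw [← step2]
    _ = h⁻¹ * (↑a)⁻¹ * h * ↑a := by group

theorem beta_lemma [Finite G] (hmeta : IsMulCommutative (commutator G))
    {H' : Subgroup G} (hAH : commutator G ≤ H') (e : ℕ) :
    ∃ f : G → G, IsCocycle f H' ∧ (∀ h ∈ H', ∃ u ∈ commutator G, f h = u ^ e) ∧
      (∀ a ∈ commutator G,
        f a = a ^ (e * Nat.card (↥H' ⧸ (commutator G).subgroupOf H'))) := by
  classical
  haveI := hmeta
  haveI hAn : (commutator G).Normal := Subgroup.commutator_normal ⊤ ⊤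
  haveI : ((commutator G).subgroupOf H').Normal := Subgroup.normal_subgroupOf
  set Q := (↥H' ⧸ (commutator G).subgroupOf H') with hQdef
  haveI : Fintype Q := Fintype.ofFinite _
  set n : ℕ := Nat.card Q with hn
  set S : Q → ↥H' := fun q => Quotient.out q with hS
  have hSmk : ∀ q : Q, (QuotientGroup.mk (S q) : Q) = q := fun q => Quotient.out_eq' q
  -- the "alpha" of the transversal
  set η : Q → ↥H' → ↥H' := fun q h => (S (q * QuotientGroup.mk h))⁻¹ * S q * h with hη
  have hηA : ∀ q h, ((η q h : ↥H') : G) ∈ commutator G := by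
    intro q h
    have h1 : (QuotientGroup.mk (S (q * QuotientGroup.mk h)) : Q) =
        QuotientGroup.mk (S q * h) := by
      rw [hSmk]
      rw [QuotientGroup.mk_mul, hSmk]
    have h2 := QuotientGroup.eq.mp h1
    have h3 : (S (q * QuotientGroup.mk h))⁻¹ * (S q * h) ∈
        (commutator G).subgroupOf H' := h2
    have : η q h = (S (q * QuotientGroup.mk h))⁻¹ * (S q * h) := by
      rw [hη]; group
    rw [this]
    exact h3
  set ζ : Q → ↥H' → ↥(commutator G) := fun q h => ⟨↑(η q h), hηA q h⟩ with hζ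
  -- cocycle identity for η
  have hηcoc : ∀ (q : Q) (x y : ↥H'), η q (x * y) = η (q * QuotientGroup.mk x) y *
      (y⁻¹ * η q x * y) := by
    intro q x y
    rw [hη]
    simp only []
    rw [QuotientGroup.mk_mul, ← mul_assoc]
    group
  -- η on A
  have hηid : ∀ (q : Q) (a : ↥H'), (↑a : G) ∈ commutator G → η q a = a := by
    intro q a ha
    have h1 : (QuotientGroup.mk a : Q) = 1 := (QuotientGroup.eq_one_iff a).mpr ha
    rw [hη]
    simp only [h1, mul_one]
    group
  refine ⟨fun g => if hg : g ∈ H' then ((∏ q, (ζ q ⟨g, hg⟩) ^ e : ↥(commutator G)) : G) else 1,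
    ?_, ?_, ?_⟩
  · -- cocycle
    intro x hx y hy
    have hxy : x * y ∈ H' := H'.mul_mem hx hy
    simp only [dif_pos hx, dif_pos hy, dif_pos hxy]
    set x' : ↥H' := ⟨x, hx⟩
    set y' : ↥H' := ⟨y, hy⟩
    have hsub : (⟨x * y, hxy⟩ : ↥H') = x' * y' := rfl
    rw [hsub]
    set χ : MulAut ↥(commutator G) := MulAut.conjNormal (y⁻¹ : G) with hχ
    have hζcoc : ∀ q, ζ q (x' * y') = ζ (q * QuotientGroup.mk x') y' * χ (ζ q x') := by
      intro q
      apply Subtype.ext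
      push_cast
      rw [hχ]
      simp only [MulAut.conjNormal_apply]
      have := congrArg (fun z : ↥H' => (z : G)) (hηcoc q x' y')
      push_cast at this
      rw [this]
      simp only [hζ, x', y']
      group
    have key : (∏ q, (ζ q (x' * y')) ^ e) =
        χ (∏ q, (ζ q x') ^ e) * (∏ q, (ζ q y') ^ e) := by
      calc (∏ q, (ζ q (x' * y')) ^ e)
          = ∏ q, ((ζ (q * QuotientGroup.mk x') y') ^ e * χ ((ζ q x') ^ e)) := by
            apply Finset.prod_congr rfl
            intro q _
            rw [hζcoc q, mul_pow, map_pow]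
        _ = (∏ q, (ζ (q * QuotientGroup.mk x') y') ^ e) * (∏ q, χ ((ζ q x') ^ e)) :=
            Finset.prod_mul_distrib
        _ = (∏ q, (ζ q y') ^ e) * χ (∏ q, (ζ q x') ^ e) := by
            have e1 : (∏ q, (ζ (q * QuotientGroup.mk x') y') ^ e) = ∏ q, (ζ q y') ^ e :=
              Fintype.prod_equiv (Equiv.mulRight (QuotientGroup.mk x'))
                (fun q => (ζ (q * QuotientGroup.mk x') y') ^ e) (fun q => (ζ q y') ^ e)
                (fun q => rfl)
            have e2 : (∏ q, χ ((ζ q x') ^ e)) = χ (∏ q, (ζ q x') ^ e) :=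
              (map_prod χ (fun q => (ζ q x') ^ e) Finset.univ).symm
            rw [e1, e2]
        _ = χ (∏ q, (ζ q x') ^ e) * (∏ q, (ζ q y') ^ e) := mul_comm _ _
    rw [key]
    push_cast
    rw [hχ]
    simp only [MulAut.conjNormal_apply]
    group
  · -- values are e-th powers from A
    intro h hh
    simp only [dif_pos hh]
    refine ⟨↑(∏ q, ζ q ⟨h, hh⟩), (∏ q, ζ q ⟨h, hh⟩).2, ?_⟩
    rw [Finset.prod_pow]
    push_cast
    rfl
  · -- value on A
    intro a ha
    have haH : a ∈ H' := hAH ha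
    simp only [dif_pos haH]
    have hζa : ∀ q, ζ q ⟨a, haH⟩ = ⟨a, ha⟩ := by
      intro q
      apply Subtype.ext
      show (↑(η q ⟨a, haH⟩) : G) = a
      rw [hηid q ⟨a, haH⟩ ha]
    calc ((∏ q, (ζ q ⟨a, haH⟩) ^ e : ↥(commutator G)) : G)
        = ((∏ _q : Q, (⟨a, ha⟩ : ↥(commutator G)) ^ e : ↥(commutator G)) : G) := by
          congr 1
          exact Finset.prod_congr rfl (fun q _ => by rw [hζa q])
      _ = (((⟨a, ha⟩ : ↥(commutator G)) ^ e) ^ n : ↥(commutator G)) := by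
          rw [Finset.prod_const, Finset.card_univ, hn, Nat.card_eq_fintype_card]
      _ = a ^ (e * n) := by
          push_cast
          rw [← pow_mul]

/-- The preimage in `G` of the `p'`-torsion of the abelianization. -/
theorem exists_H [Finite G] (p : ℕ) (hp : p.Prime) :
    ∃ H' : Subgroup G, H'.Normal ∧ commutator G ≤ H' ∧
      (∀ x ∈ H', x ^ p ∈ commutator G → x ∈ commutator G) ∧
      (∃ k : ℕ, H'.index = p ^ k) := by
  classical
  set nG := Nat.card G with hnG
  have hnG0 : nG ≠ 0 := Nat.card_pos.ne'
  set M := ordCompl[p] nG with hM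
  set ψ : G →* Abelianization G :=
    (powMonoidHom M : Abelianization G →* Abelianization G).comp Abelianization.of with hψ
  refine ⟨ψ.ker, MonoidHom.normal_ker ψ, ?_, ?_, ?_⟩
  · intro a ha
    have h1 : Abelianization.of a = 1 := by
      apply (QuotientGroup.eq_one_iff a).mpr
      exact ha
    show ψ a = 1
    rw [hψ]
    simp [h1]
  · intro x hx hxp
    have h1 : (Abelianization.of x) ^ M = 1 := hx
    have h2 : (Abelianization.of x) ^ p = 1 := by
      have : Abelianization.of (x ^ p) = 1 := (QuotientGroup.eq_one_iff _).mpr hxp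
      rw [map_pow] at this
      exact this
    have hco : Nat.Coprime p M := Nat.coprime_ordCompl hp hnG0
    have hord1 : orderOf (Abelianization.of x) ∣ p := orderOf_dvd_of_pow_eq_one h2
    have hord2 : orderOf (Abelianization.of x) ∣ M := orderOf_dvd_of_pow_eq_one h1
    have : orderOf (Abelianization.of x) ∣ 1 := by
      have := Nat.dvd_gcd hord1 hord2
      rwa [Nat.Coprime.gcd_eq_one hco] at this
    have : Abelianization.of x = 1 := orderOf_eq_one_iff.mp (Nat.dvd_one.mp this)
    exact (QuotientGroup.eq_one_iff x).mp this
  · have hpg : IsPGroup p (G ⧸ ψ.ker) := by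
      intro q
      refine ⟨nG.factorization p, ?_⟩
      induction q using QuotientGroup.induction_on with
      | H x =>
        rw [← QuotientGroup.mk_pow]
        rw [QuotientGroup.eq_one_iff]
        show ψ (x ^ p ^ nG.factorization p) = 1
        rw [map_pow, hψ]
        simp only [MonoidHom.comp_apply, powMonoidHom_apply]
        rw [← pow_mul, mul_comm M (p ^ nG.factorization p), Nat.ordProj_mul_ordCompl_eq_self nG p, ← map_pow]
        rw [hnG, pow_card_eq_one']
        simp
    haveI : Fact p.Prime := ⟨hp⟩
    obtain ⟨k, hk⟩ := IsPGroup.iff_card.mp hpg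
    exact ⟨k, hk⟩

/-- The fixed-point argument: a normal `p`-subgroup of `A` centralized by `H'` is trivial. -/
theorem fixed_trivial [Finite G] (hz : Subgroup.center G ⊓ commutator G = ⊥)
    (p : ℕ) (hp : p.Prime) {H' : Subgroup G} (hH'n : H'.Normal)
    (hpq : ∃ k : ℕ, H'.index = p ^ k)
    {B : Subgroup G} (hBn : B.Normal) (hBp : IsPGroup p ↥B) (hBA : B ≤ commutator G)
    (hBC : ∀ b ∈ B, ∀ h ∈ H', h * b = b * h) : B = ⊥ := by
  classical
  haveI : Fact p.Prime := ⟨hp⟩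
  haveI := hH'n
  haveI := hBn
  by_contra hBbot
  -- get a Sylow p-subgroup
  obtain ⟨S⟩ := (inferInstance : Nonempty (Sylow p G))
  -- H' ⊔ S = ⊤
  have hsup : H' ⊔ (S : Subgroup G) = ⊤ := by
    have h1 : (H' ⊔ (S : Subgroup G)).index ∣ H'.index := Subgroup.index_dvd_of_le le_sup_left
    have h2 : (H' ⊔ (S : Subgroup G)).index ∣ (S : Subgroup G).index :=
      Subgroup.index_dvd_of_le le_sup_right
    obtain ⟨k, hk⟩ := hpq
    rw [hk] at h1
    obtain ⟨j, hj, hjk⟩ := (Nat.dvd_prime_pow hp).mp h1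
    have hj0 : j = 0 := by
      by_contra hj0
      have : p ∣ (H' ⊔ (S : Subgroup G)).index := by
        rw [hjk]
        exact dvd_pow_self p hj0
      exact S.not_dvd_index (this.trans h2)
    rw [hj0, pow_zero] at hjk
    exact Subgroup.index_eq_one.mp hjk
  -- the action of S on B by conjugation
  letI : MulAction ↥(S : Subgroup G) ↥B :=
    MulAction.compHom _ ((MulAut.conjNormal (H := B)).comp (S : Subgroup G).subtype)
  have hsmul : ∀ (s : ↥(S : Subgroup G)) (b : ↥B), ((s • b : ↥B) : G) = ↑s * ↑b * (↑s)⁻¹ :=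
    fun s b => rfl
  have h1fix : (1 : ↥B) ∈ MulAction.fixedPoints ↥(S : Subgroup G) ↥B := by
    intro s
    apply Subtype.ext
    rw [hsmul]
    simp
  have hpB : p ∣ Nat.card ↥B := by
    obtain ⟨k, hk⟩ := IsPGroup.iff_card.mp hBp
    have hk1 : Nat.card ↥B ≠ 1 := by
      intro h
      exact hBbot (Subgroup.card_eq_one.mp h)
    rw [hk] at hk1 ⊢
    rcases Nat.eq_zero_or_pos k with hk0 | hk0
    · exact absurd (by rw [hk0, pow_zero]) hk1
    · exact dvd_pow_self p hk0.ne'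
  obtain ⟨b, hbfix, hb1⟩ :=
    S.isPGroup'.exists_fixed_point_of_prime_dvd_card_of_fixed_point ↥B hpB h1fix
  -- b is a nontrivial element of B centralized by S and H', hence central
  have hbC : (↑b : G) ∈ Subgroup.center G := by
    rw [Subgroup.mem_center_iff]
    intro g
    have hg : g ∈ H' ⊔ (S : Subgroup G) := by rw [hsup]; trivial
    have hHle : H' ≤ Subgroup.centralizer {(↑b : G)} := by
      intro h hh
      rw [Subgroup.mem_centralizer_iff]
      rintro y (rfl : y = ↑b)
      exact (hBC ↑b b.2 h hh).symm
    have hSle : (S : Subgroup G) ≤ Subgroup.centralizer {(↑b : G)} := by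
      intro s hs
      rw [Subgroup.mem_centralizer_iff]
      rintro y (rfl : y = ↑b)
      have := hbfix ⟨s, hs⟩
      have hcoe : s * ↑b * s⁻¹ = (↑b : G) := by
        rw [← hsmul ⟨s, hs⟩ b, this]
      calc ↑b * s = (s * ↑b * s⁻¹) * s := by rw [hcoe]
        _ = s * ↑b := by group
    have : H' ⊔ (S : Subgroup G) ≤ Subgroup.centralizer {(↑b : G)} := sup_le hHle hSle
    have hgb := this hg
    rw [Subgroup.mem_centralizer_iff] at hgb
    exact (hgb ↑b rfl).symm
  have : (↑b : G) ∈ Subgroup.center G ⊓ commutator G := ⟨hbC, hBA b.2⟩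
  rw [hz] at this
  exact hb1 (Subtype.ext (by simpa using this.symm))


theorem key_p [Finite G] (hmeta : IsMulCommutative (commutator G))
    (hz : Subgroup.center G ⊓ commutator G = ⊥)
    (p : ℕ) (hp : p.Prime) (hpA : p ∣ Nat.card ↥(commutator G)) :
    (∀ e : ℕ,
      Nat.card ↥(commutator G) ∣ e * p ^ ((Nat.card ↥(commutator G)).factorization p) →
      e ≡ 1 [MOD p ^ ((Nat.card ↥(commutator G)).factorization p)] →
      ∃ f : G → G, IsCocycle f ⊤ ∧
        (∀ g : G, f g ∈ commutator G ∧
          f g ^ (p ^ ((Nat.card ↥(commutator G)).factorization p)) = 1) ∧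
        (∀ a ∈ commutator G, f a = a ^ e)) ∧
    (∀ d : G → G, IsCocycle d ⊤ →
      (∀ g : G, d g ∈ commutator G ∧
        d g ^ (p ^ ((Nat.card ↥(commutator G)).factorization p)) = 1) →
      (∀ a ∈ commutator G, d a = 1) →
      ∃ b ∈ commutator G, ∀ g : G, d g = g⁻¹ * b⁻¹ * g * b) := by
  classical
  haveI := hmeta
  haveI hAn : (commutator G).Normal := Subgroup.commutator_normal ⊤ ⊤
  set nA := Nat.card ↥(commutator G) with hnA
  have hnA0 : nA ≠ 0 := Nat.card_pos.ne'
  set P := p ^ nA.factorization p with hPdef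
  set M := ordCompl[p] nA with hMdef
  have hPM : P * M = nA := Nat.ordProj_mul_ordCompl_eq_self nA p
  have hP1 : 1 < P := by
    rw [hPdef]
    exact Nat.one_lt_pow (Nat.Prime.factorization_pos_of_dvd hp hnA0 hpA).ne' hp.one_lt
  have hcoPM : Nat.Coprime P M :=
    Nat.Coprime.pow_left _ ((Nat.coprime_ordCompl hp hnA0))
  have horder : ∀ x ∈ commutator G, x ^ nA = 1 := by
    intro x hx
    exact orderOf_dvd_iff_pow_eq_one.mp ((commutator G).orderOf_dvd_natCard hx)
  -- the p-primary part of the commutator subgroup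
  set Ap : Subgroup G :=
    { carrier := setOf fun x => x ∈ commutator G ∧ x ^ P = 1
      one_mem' := ⟨(commutator G).one_mem, one_pow P⟩
      mul_mem' := by
        rintro a b ⟨haA, haP⟩ ⟨hbA, hbP⟩
        refine ⟨(commutator G).mul_mem haA hbA, ?_⟩
        rw [(Commute.mul_pow ?_ P), haP, hbP, one_mul]
        exact acomm hmeta haA hbA
      inv_mem' := by
        rintro a ⟨haA, haP⟩
        exact ⟨(commutator G).inv_mem haA, by rw [inv_pow, haP, inv_one]⟩ } with hApdef
  have hApmem : ∀ x, x ∈ Ap ↔ x ∈ commutator G ∧ x ^ P = 1 := fun x => Iff.rfl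
  have hApA : Ap ≤ commutator G := fun x hx => ((hApmem x).mp hx).1
  have hApn : Ap.Normal := by
    constructor
    intro n hn g
    obtain ⟨hnA', hnP⟩ := (hApmem n).mp hn
    refine (hApmem _).mpr ⟨hAn.conj_mem n hnA' g, ?_⟩
    have : g * n * g⁻¹ = (g⁻¹)⁻¹ * n * g⁻¹ := by group
    rw [this, conj_pow', hnP]
    group
  -- the subgroup H'
  obtain ⟨H', hH'norm, hAH, hHp, hHidx⟩ := exists_H (G := G) p hp
  haveI := hH'norm
  have hApH : Ap ≤ H' := hApA.trans hAH
  haveI : Fact p.Prime := ⟨hp⟩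
  -- p does not divide the index of Ap in H'
  set m := Nat.card (↥H' ⧸ Ap.subgroupOf H') with hmdef
  have hApsub : ∀ x : ↥H', x ∈ Ap.subgroupOf H' ↔ (x : G) ∈ Ap := fun x => Iff.rfl
  have hpm : ¬ p ∣ m := by
    intro hdvd
    haveI : (Ap.subgroupOf H').Normal := Subgroup.normal_subgroupOf
    obtain ⟨q, hq⟩ := exists_prime_orderOf_dvd_card' (G := ↥H' ⧸ Ap.subgroupOf H') p hdvd
    obtain ⟨x, rfl⟩ := QuotientGroup.mk_surjective q
    have hq1 : (QuotientGroup.mk x : ↥H' ⧸ Ap.subgroupOf H') ^ p = 1 := by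
      rw [← hq]; exact pow_orderOf_eq_one _
    rw [← QuotientGroup.mk_pow, QuotientGroup.eq_one_iff] at hq1
    have hxpAp : ((x : G)) ^ p ∈ Ap := by
      have := (hApsub _).mp hq1
      push_cast at this
      exact this
    have hxA : (x : G) ∈ commutator G := hHp _ x.2 (hApA hxpAp)
    have hordx : orderOf (x : G) ∣ p * P := by
      apply orderOf_dvd_of_pow_eq_one
      rw [pow_mul]
      exact ((hApmem _).mp hxpAp).2
    have hordnA : orderOf (x : G) ∣ nA := (commutator G).orderOf_dvd_natCard hxA
    have hxP : (x : G) ^ P = 1 := by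
      have hpp : p * P = p ^ (nA.factorization p + 1) := by rw [hPdef, pow_succ']
      rw [hpp] at hordx
      obtain ⟨j, hj, hje⟩ := (Nat.dvd_prime_pow hp).mp hordx
      have hjle : j ≤ nA.factorization p := by
        apply (Nat.Prime.pow_dvd_iff_le_factorization hp hnA0).mp
        rw [← hje]
        exact hordnA
      apply orderOf_dvd_iff_pow_eq_one.mp
      rw [hje, hPdef]
      exact pow_dvd_pow p hjle
    have hxAp : x ∈ Ap.subgroupOf H' := (hApsub _).mpr ((hApmem _).mpr ⟨hxA, hxP⟩)
    have : (QuotientGroup.mk x : ↥H' ⧸ Ap.subgroupOf H') = 1 :=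
      (QuotientGroup.eq_one_iff _).mpr hxAp
    rw [this] at hq
    simp at hq
    exact hp.ne_one hq.symm
  have hcoPm : Nat.Coprime m P :=
    Nat.Coprime.pow_right _ (((Nat.Prime.coprime_iff_not_dvd hp).mpr hpm).symm)
  obtain ⟨m'', -, hm''⟩ := Nat.exists_mul_mod_eq_one_of_coprime hcoPm hP1
  have hmm'' : m * m'' ≡ 1 [MOD P] := by
    show m * m'' % P = 1 % P
    rw [hm'', Nat.mod_eq_of_lt hP1]
  -- B = ⊥
  set B := Ap ⊓ Subgroup.centralizer (H' : Set G) with hBdef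
  have hBbot : B = ⊥ := by
    have hBn : B.Normal := by
      constructor
      intro n hn g
      obtain ⟨hnAp, hnC⟩ := Subgroup.mem_inf.mp hn
      refine Subgroup.mem_inf.mpr ⟨hApn.conj_mem n hnAp g, ?_⟩
      rw [Subgroup.mem_centralizer_iff]
      intro h hh
      rw [Subgroup.mem_centralizer_iff] at hnC
      have h1 : (g⁻¹ * h * g) * n = n * (g⁻¹ * h * g) := hnC _ (hH'norm.conj_mem' h hh g)
      calc h * (g * n * g⁻¹) = g * ((g⁻¹ * h * g) * n) * g⁻¹ := by group
        _ = g * (n * (g⁻¹ * h * g)) * g⁻¹ := by rw [h1]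
        _ = g * n * g⁻¹ * h := by group
    have hBp : IsPGroup p ↥B := by
      intro b
      refine ⟨nA.factorization p, ?_⟩
      apply Subtype.ext
      push_cast
      exact ((hApmem _).mp (Subgroup.mem_inf.mp b.2).1).2
    exact fixed_trivial hz p hp hH'norm hHidx hBn hBp
      (fun x hx => hApA (Subgroup.mem_inf.mp hx).1)
      (fun b hb h hh =>
        (Subgroup.mem_centralizer_iff.mp (Subgroup.mem_inf.mp hb).2) h hh)
  -- inner conjugacy lemma on H'
  have Cint : ∀ d : G → G, IsCocycle d H' → (∀ h ∈ H', d h ∈ Ap) → (∀ v ∈ Ap, d v = 1) →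
      ∃ b ∈ Ap, ∀ h ∈ H', d h = h⁻¹ * b⁻¹ * h * b := by
    intro d hd hdV hd1
    obtain ⟨a, haAp, hkey⟩ := avg_lemma hmeta hApA hApn hApH d hd hdV hd1
    refine ⟨a ^ m'', Ap.pow_mem haAp m'', ?_⟩
    intro h hh
    have h1 : d h ^ m = h⁻¹ * a⁻¹ * h * a := hkey h hh
    have hdhP : d h ^ P = 1 := ((hApmem _).mp (hdV h hh)).2
    have hdm : d h ^ (m * m'') = d h := by
      have hdvd : orderOf (d h) ∣ P := orderOf_dvd_of_pow_eq_one hdhP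
      calc d h ^ (m * m'') = d h ^ 1 := by
            rw [pow_eq_pow_iff_modEq]
            exact (hmm''.of_dvd hdvd)
        _ = d h := pow_one _
    have haA : a ∈ commutator G := hApA haAp
    calc d h = d h ^ (m * m'') := hdm.symm
      _ = (d h ^ m) ^ m'' := by rw [pow_mul]
      _ = ((h⁻¹ * a⁻¹ * h) * a) ^ m'' := by rw [h1]
      _ = (h⁻¹ * a⁻¹ * h) ^ m'' * a ^ m'' := by
          refine (Commute.mul_pow ?_ m'')
          exact acomm hmeta (aconj hAn ((commutator G).inv_mem haA) h) haA
      _ = h⁻¹ * (a ^ m'')⁻¹ * h * a ^ m'' := by rw [conj_pow', inv_pow]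
  constructor
  · -- existence of the crossed hom with f|A = ^e
    intro e heP he1
    haveI : ((commutator G).subgroupOf H').Normal := Subgroup.normal_subgroupOf
    set n' := Nat.card (↥H' ⧸ (commutator G).subgroupOf H') with hn'def
    have hpn' : ¬ p ∣ n' := by
      intro hdvd
      obtain ⟨q, hq⟩ :=
        exists_prime_orderOf_dvd_card' (G := ↥H' ⧸ (commutator G).subgroupOf H') p hdvd
      obtain ⟨x, rfl⟩ := QuotientGroup.mk_surjective q
      have hq1 : (QuotientGroup.mk x : ↥H' ⧸ (commutator G).subgroupOf H') ^ p = 1 := by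
        rw [← hq]; exact pow_orderOf_eq_one _
      rw [← QuotientGroup.mk_pow, QuotientGroup.eq_one_iff] at hq1
      have hxpA : ((x : G)) ^ p ∈ commutator G := by
        have : ((x ^ p : ↥H') : G) ∈ commutator G := hq1
        push_cast at this
        exact this
      have hxA : (x : G) ∈ commutator G := hHp _ x.2 hxpA
      have : (QuotientGroup.mk x : ↥H' ⧸ (commutator G).subgroupOf H') = 1 :=
        (QuotientGroup.eq_one_iff _).mpr hxA
      rw [this] at hq
      simp at hq
      exact hp.ne_one hq.symm
    have hcoPn' : Nat.Coprime n' P :=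
      Nat.Coprime.pow_right _ (((Nat.Prime.coprime_iff_not_dvd hp).mpr hpn').symm)
    obtain ⟨n'', -, hn''⟩ := Nat.exists_mul_mod_eq_one_of_coprime hcoPn' hP1
    have hnn'' : n' * n'' ≡ 1 [MOD P] := by
      show n' * n'' % P = 1 % P
      rw [hn'', Nat.mod_eq_of_lt hP1]
    obtain ⟨β, hβcoc, hβval, hβA⟩ := beta_lemma hmeta hAH e
    have hβvA : ∀ h ∈ H', β h ∈ commutator G := by
      intro h hh
      obtain ⟨u, hu, hβ⟩ := hβval h hh
      rw [hβ]
      exact Subgroup.pow_mem _ hu e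
    set f₁ := fun g => β g ^ n'' with hf₁def
    have hf₁coc : IsCocycle f₁ H' := cocycle_pow hmeta hβcoc hβvA n''
    have hf₁Ap : ∀ h ∈ H', f₁ h ∈ Ap := by
      intro h hh
      obtain ⟨u, hu, hβ⟩ := hβval h hh
      show β h ^ n'' ∈ Ap
      refine (hApmem _).mpr ⟨Subgroup.pow_mem _ (hβvA h hh) n'', ?_⟩
      have he4 : u ^ (e * P) = 1 := by
        obtain ⟨t, ht⟩ := heP
        rw [ht, pow_mul, horder u hu, one_pow]
      have key : ((u ^ e) ^ n'') ^ P = (u ^ (e * P)) ^ n'' := by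
        rw [← pow_mul, ← pow_mul, ← pow_mul]
        congr 1
        ring
      rw [hβ, key, he4, one_pow]
    have hf₁id : ∀ v ∈ Ap, f₁ v = v := by
      intro v hv
      have hvA := hApA hv
      show β v ^ n'' = v
      rw [hβA v hvA, ← pow_mul]
      have hordv : orderOf v ∣ P := orderOf_dvd_of_pow_eq_one ((hApmem _).mp hv).2
      have hmod : e * n' * n'' ≡ 1 [MOD P] := by
        have h1 : e * (n' * n'') ≡ 1 * 1 [MOD P] := he1.mul hnn''
        rw [mul_assoc]
        simpa using h1
      calc v ^ (e * n' * n'') = v ^ 1 := by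
            rw [pow_eq_pow_iff_modEq]
            exact hmod.of_dvd hordv
        _ = v := pow_one v
    obtain ⟨K₀, hK₀c, hK₀mem⟩ := complement_of_fun hmeta hApA hApH f₁ hf₁coc hf₁Ap hf₁id
    have hmemconj : ∀ (c : G) (K : Subgroup G) (x : G),
        x ∈ Subgroup.map (MulAut.conj c).toMonoidHom K ↔ c⁻¹ * x * c ∈ K := by
      intro c K x
      rw [Subgroup.mem_map]
      simp only [MulEquiv.coe_toMonoidHom, MulAut.conj_apply]
      constructor
      · rintro ⟨y, hy, rfl⟩
        have : c⁻¹ * (c * y * c⁻¹) * c = y := by group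
        rw [this]
        exact hy
      · intro h
        exact ⟨c⁻¹ * x * c, h, by group⟩
    have hFrat : ∀ g : G, ∃ b ∈ Ap, g * b ∈ Subgroup.normalizer (K₀ : Set G) := by
      intro g
      set fg := fun x => g⁻¹ * f₁ (g * x * g⁻¹) * g with hfgdef
      have hfgcoc : IsCocycle fg H' := by
        intro x hx y hy
        have hgx : g * x * g⁻¹ ∈ H' := hH'norm.conj_mem x hx g
        have hgy : g * y * g⁻¹ ∈ H' := hH'norm.conj_mem y hy g
        have h1 : g * (x * y) * g⁻¹ = (g * x * g⁻¹) * (g * y * g⁻¹) := by group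
        show g⁻¹ * f₁ (g * (x * y) * g⁻¹) * g = _
        rw [h1, hf₁coc _ hgx _ hgy]
        show _ = y⁻¹ * (g⁻¹ * f₁ (g * x * g⁻¹) * g) * y * (g⁻¹ * f₁ (g * y * g⁻¹) * g)
        group
      have hfgAp : ∀ h ∈ H', fg h ∈ Ap := by
        intro h hh
        exact aconj hApn (hf₁Ap _ (hH'norm.conj_mem h hh g)) g
      have hfgid : ∀ v ∈ Ap, fg v = v := by
        intro v hv
        show g⁻¹ * f₁ (g * v * g⁻¹) * g = v
        rw [hf₁id _ (hApn.conj_mem v hv g)]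
        group
      set d := fun x => fg x * (f₁ x)⁻¹ with hddef
      have hdcoc : IsCocycle d H' :=
        cocycle_mul hmeta hfgcoc
          (cocycle_inv_fun hmeta hf₁coc (fun w hw => hApA (hf₁Ap w hw)))
          (fun w hw => hApA (hfgAp w hw))
          (fun w hw => (commutator G).inv_mem (hApA (hf₁Ap w hw)))
      have hdAp : ∀ h ∈ H', d h ∈ Ap := fun h hh =>
        Ap.mul_mem (hfgAp h hh) (Ap.inv_mem (hf₁Ap h hh))
      have hdid : ∀ v ∈ Ap, d v = 1 := by
        intro v hv
        show fg v * (f₁ v)⁻¹ = 1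
        rw [hfgid v hv, hf₁id v hv]
        group
      obtain ⟨b, hbAp, hdb⟩ := Cint d hdcoc hdAp hdid
      refine ⟨b, hbAp, ?_⟩
      have hrel : ∀ w ∈ H', fg w = f₁ w * (w⁻¹ * b⁻¹ * w * b) := by
        intro w hw
        have h1 : fg w * (f₁ w)⁻¹ = w⁻¹ * b⁻¹ * w * b := hdb w hw
        have hcomm : (w⁻¹ * b⁻¹ * w * b) * f₁ w = f₁ w * (w⁻¹ * b⁻¹ * w * b) :=
          acomm hmeta
            ((commutator G).mul_mem (aconj hAn ((commutator G).inv_mem (hApA hbAp)) w)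
              (hApA hbAp))
            (hApA (hf₁Ap w hw))
        calc fg w = (fg w * (f₁ w)⁻¹) * f₁ w := by group
          _ = (w⁻¹ * b⁻¹ * w * b) * f₁ w := by rw [h1]
          _ = f₁ w * (w⁻¹ * b⁻¹ * w * b) := hcomm
      have hK₂mem : ∀ x, x ∈ Subgroup.map (MulAut.conj g⁻¹).toMonoidHom K₀ ↔
          (x ∈ H' ∧ fg x = 1) := by
        intro x
        rw [hmemconj, hK₀mem]
        rw [inv_inv]
        constructor
        · rintro ⟨h1, h2⟩
          have hx : x ∈ H' := by
            have := hH'norm.conj_mem' _ h1 g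
            have he : g⁻¹ * (g * x * g⁻¹) * g = x := by group
            rwa [he] at this
          refine ⟨hx, ?_⟩
          show g⁻¹ * f₁ (g * x * g⁻¹) * g = 1
          rw [h2]
          group
        · rintro ⟨h1, h2⟩
          refine ⟨hH'norm.conj_mem _ h1 g, ?_⟩
          have h3 : g⁻¹ * f₁ (g * x * g⁻¹) * g = 1 := h2
          calc f₁ (g * x * g⁻¹) = g * (g⁻¹ * f₁ (g * x * g⁻¹) * g) * g⁻¹ := by group
            _ = g * 1 * g⁻¹ := by rw [h3]
            _ = 1 := by group
      have hD3 := map_conj_ker hmeta hApA hApn hApH f₁ fg hf₁coc hf₁id hK₀mem hK₂mem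
        hbAp hrel
      rw [Subgroup.mem_normalizer_iff]
      intro h
      have key : ∀ x : G, b⁻¹ * x * b ∈ K₀ ↔ g * x * g⁻¹ ∈ K₀ := by
        intro x
        rw [← hmemconj b K₀ x]
        have h2 : (g * x * g⁻¹ ∈ K₀) ↔ ((g⁻¹)⁻¹ * x * g⁻¹ ∈ K₀) := by rw [inv_inv]
        rw [h2, ← hmemconj g⁻¹ K₀ x, hD3]
      have key2 := key (b * h * b⁻¹)
      have e1 : b⁻¹ * (b * h * b⁻¹) * b = h := by group
      have e2 : g * (b * h * b⁻¹) * g⁻¹ = (g * b) * h * (g * b)⁻¹ := by group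
      rw [e1, e2] at key2
      exact key2
    set N := Subgroup.normalizer (K₀ : Set G) with hNdef
    have hNAp : N ⊓ Ap = ⊥ := by
      rw [eq_bot_iff]
      intro x hx
      obtain ⟨hxN, hxAp⟩ := Subgroup.mem_inf.mp hx
      have hxB : x ∈ B := by
        refine Subgroup.mem_inf.mpr ⟨hxAp, ?_⟩
        rw [Subgroup.mem_centralizer_iff]
        intro h hh
        have : h ∈ (K₀ : Set G) * (Ap : Set G) := by rw [hK₀c.2.2]; exact hh
        obtain ⟨k, hk, v, hv, rfl⟩ := this
        have hcomm_v : v * x = x * v := acomm hmeta (hApA hv) (hApA hxAp)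
        have hxk : x * k = k * x := by
          have h1 : x⁻¹ * k⁻¹ * x ∈ K₀ := by
            apply (Subgroup.mem_normalizer_iff.mp hxN (x⁻¹ * k⁻¹ * x)).mpr
            have he : x * (x⁻¹ * k⁻¹ * x) * x⁻¹ = k⁻¹ := by group
            rw [he]
            exact K₀.inv_mem hk
          have h2 : (x⁻¹ * k⁻¹ * x) * k ∈ K₀ := K₀.mul_mem h1 hk
          have h3 : (x⁻¹ * k⁻¹ * x) * k ∈ Ap := by
            have he : (x⁻¹ * k⁻¹ * x) * k = x⁻¹ * (k⁻¹ * x * k) := by group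
            rw [he]
            exact Ap.mul_mem (Ap.inv_mem hxAp) (aconj hApn hxAp k)
          have h4 : (x⁻¹ * k⁻¹ * x) * k = 1 := by
            have h5 : (x⁻¹ * k⁻¹ * x) * k ∈ K₀ ⊓ Ap := Subgroup.mem_inf.mpr ⟨h2, h3⟩
            rw [hK₀c.2.1] at h5
            exact h5
          calc x * k = k * x * ((x⁻¹ * k⁻¹ * x) * k) := by group
            _ = k * x * 1 := by rw [h4]
            _ = k * x := by group
        calc k * v * x = k * (v * x) := by group
          _ = k * (x * v) := by rw [hcomm_v]
          _ = (k * x) * v := by group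
          _ = (x * k) * v := by rw [← hxk]
          _ = x * (k * v) := by group
      rw [hBbot] at hxB
      exact hxB
    have hNc : IsComplementOfIn N Ap ⊤ := by
      refine ⟨le_top, hNAp, ?_⟩
      apply Set.Subset.antisymm
      · intro y _
        simp
      · intro g _
        obtain ⟨b, hbAp, hgb⟩ := hFrat g
        exact ⟨g * b, hgb, b⁻¹, Ap.inv_mem hbAp, by group⟩
    obtain ⟨fp, hfpcoc, hfpval, hfpid, hfpker⟩ :=
      exists_fun_of_complement hmeta hApA hApn hNc
    refine ⟨fp, hfpcoc, ?_, ?_⟩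
    · intro g
      have h1 := hfpval g (Subgroup.mem_top g)
      exact ⟨hApA h1, ((hApmem _).mp h1).2⟩
    · intro a haA
      have haeAp : a ^ e ∈ Ap := by
        refine (hApmem _).mpr ⟨Subgroup.pow_mem _ haA e, ?_⟩
        rw [← pow_mul]
        obtain ⟨t, ht⟩ := heP
        rw [ht, pow_mul, horder a haA, one_pow]
      set r := a * (a ^ e)⁻¹ with hrdef
      have hrA : r ∈ commutator G :=
        (commutator G).mul_mem haA ((commutator G).inv_mem (Subgroup.pow_mem _ haA e))
      have hrM : r ^ M = 1 := by
        have hcomm : Commute a (a ^ e)⁻¹ := ((Commute.refl a).pow_right e).inv_right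
        have hstep : a ^ (e * M) = a ^ M := by
          rw [pow_eq_pow_iff_modEq]
          have hmod : e * M ≡ 1 * M [MOD P * M] := Nat.ModEq.mul_right' M he1
          rw [hPM, one_mul] at hmod
          exact hmod.of_dvd ((commutator G).orderOf_dvd_natCard haA)
        rw [hrdef, hcomm.mul_pow, inv_pow, ← pow_mul, mul_comm e M, mul_comm M e, hstep]
        group
      have hrmem : r ∈ (N : Set G) * (Ap : Set G) := by
        rw [hNc.2.2]
        simp
      obtain ⟨nn, hnn, w, hw, hnw0⟩ := hrmem
      have hnw : nn * w = r := hnw0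
      have hnnA : nn ∈ commutator G := by
        have he2 : nn = r * w⁻¹ := by rw [← hnw]; group
        rw [he2]
        exact (commutator G).mul_mem hrA ((commutator G).inv_mem (hApA hw))
      have hprod : nn ^ M * w ^ M = 1 := by
        have hcomm : Commute nn w := acomm hmeta hnnA (hApA hw)
        rw [← hcomm.mul_pow, hnw, hrM]
      have hnnM : nn ^ M = 1 := by
        have h1 : nn ^ M = (w ^ M)⁻¹ := eq_inv_of_mul_eq_one_left hprod
        have h2 : nn ^ M ∈ N ⊓ Ap :=
          Subgroup.mem_inf.mpr ⟨N.pow_mem hnn M, h1 ▸ Ap.inv_mem (Ap.pow_mem hw M)⟩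
        rw [hNAp] at h2
        exact h2
      have hwM : w ^ M = 1 := by
        have := hprod
        rw [hnnM, one_mul] at this
        exact this
      have hw1 : w = 1 := by
        have ho1 : orderOf w ∣ M := orderOf_dvd_of_pow_eq_one hwM
        have ho2 : orderOf w ∣ P := orderOf_dvd_of_pow_eq_one ((hApmem _).mp hw).2
        have ho3 : orderOf w ∣ 1 := by
          have h6 := Nat.dvd_gcd ho2 ho1
          rwa [Nat.Coprime.gcd_eq_one hcoPM] at h6
        have : orderOf w = 1 := Nat.dvd_one.mp ho3
        rwa [orderOf_eq_one_iff] at this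
      have hrN : r ∈ N := by
        have : r = nn := by rw [← hnw, hw1, mul_one]
        rw [this]
        exact hnn
      have hfpr : fp r = 1 := ((hfpker r).mp hrN).2
      have hdecomp : a = r * a ^ e := by rw [hrdef]; group
      calc fp a = fp (r * a ^ e) := by rw [← hdecomp]
        _ = (a ^ e)⁻¹ * fp r * (a ^ e) * fp (a ^ e) :=
            hfpcoc r (Subgroup.mem_top r) (a ^ e) (Subgroup.mem_top (a ^ e))
        _ = (a ^ e)⁻¹ * 1 * (a ^ e) * (a ^ e) := by rw [hfpr, hfpid _ haeAp]
        _ = a ^ e := by group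
  · -- conjugacy part
    intro d hd hdval hdA
    have hdH : IsCocycle d H' := fun x _ y _ => hd x trivial y trivial
    obtain ⟨b, hbAp, hbH⟩ := Cint d hdH
      (fun h _ => (hApmem _).mpr ⟨(hdval h).1, (hdval h).2⟩)
      (fun v hv => hdA v (hApA hv))
    have hbA : b ∈ commutator G := hApA hbAp
    set ε : G → G := fun x => d x * (x⁻¹ * b⁻¹ * x * b)⁻¹ with hεdef
    have hκval : ∀ x : G, x⁻¹ * b⁻¹ * x * b ∈ Ap := fun x =>
      Ap.mul_mem (aconj hApn (Ap.inv_mem hbAp) x) hbAp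
    have hκvalA : ∀ x ∈ (⊤ : Subgroup G), x⁻¹ * b⁻¹ * x * b ∈ commutator G :=
      fun x _ => hApA (hκval x)
    have hεcoc : IsCocycle ε ⊤ :=
      cocycle_mul hmeta hd (cocycle_inv_fun hmeta (cocycle_kappa b) hκvalA)
        (fun x _ => (hdval x).1) (fun x _ => (commutator G).inv_mem (hκvalA x trivial))
    have hεval : ∀ x : G, ε x ∈ Ap := fun x =>
      Ap.mul_mem ((hApmem _).mpr ⟨(hdval x).1, (hdval x).2⟩) (Ap.inv_mem (hκval x))
    have hε1 : ∀ h ∈ H', ε h = 1 := by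
      intro h hh
      rw [hεdef]
      simp only []
      rw [hbH h hh]
      group
    have hεcen : ∀ (g : G), ∀ h ∈ H', h⁻¹ * ε g * h = ε g := by
      intro g h hh
      have egh : ε (g * h) = h⁻¹ * ε g * h := by
        rw [hεcoc g trivial h trivial, hε1 h hh, mul_one]
      have ehg : ε (h * g) = ε g := by
        rw [hεcoc h trivial g trivial, hε1 h hh]
        group
      set c := g⁻¹ * h⁻¹ * g * h with hcdef
      have hcA : c ∈ commutator G := by
        have : c = ⁅g⁻¹, h⁻¹⁆ := by rw [hcdef]; group
        rw [this, commutator_def]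
        exact Subgroup.commutator_mem_commutator (Subgroup.mem_top _) (Subgroup.mem_top _)
      have hgh : g * h = (h * g) * c := by rw [hcdef]; group
      have e1 : ε (g * h) = ε ((h * g) * c) := by rw [← hgh]
      have e2 : ε ((h * g) * c) = c⁻¹ * ε (h * g) * c * ε c := hεcoc (h*g) trivial c trivial
      have e3 : ε c = 1 := hε1 c (hAH hcA)
      have e4 : c⁻¹ * ε (h * g) * c = ε (h * g) := by
        have hc : ε (h * g) * c = c * ε (h * g) :=
          acomm hmeta (hApA (hεval (h*g))) hcA
        calc c⁻¹ * ε (h * g) * c = c⁻¹ * (ε (h * g) * c) := by group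
          _ = c⁻¹ * (c * ε (h * g)) := by rw [hc]
          _ = ε (h * g) := by group
      rw [egh.symm, e1, e2, e3, e4, mul_one, ehg]
    have hεB : ∀ g : G, ε g ∈ B := by
      intro g
      refine Subgroup.mem_inf.mpr ⟨hεval g, ?_⟩
      rw [Subgroup.mem_centralizer_iff]
      intro h hh
      calc h * ε g = (h * ε g * h⁻¹) * h := by group
        _ = ε g * h := by
            have := hεcen g h⁻¹ (H'.inv_mem hh)
            have h2 : h * ε g * h⁻¹ = ε g := by
              have h3 : (h⁻¹)⁻¹ * ε g * h⁻¹ = ε g := this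
              rw [inv_inv] at h3
              exact h3
            rw [h2]
    refine ⟨b, hbA, ?_⟩
    intro g
    have : ε g = 1 := by
      have := hεB g
      rw [hBbot] at this
      exact this
    rw [hεdef] at this
    simp only [] at this
    calc d g = d g * (g⁻¹ * b⁻¹ * g * b)⁻¹ * (g⁻¹ * b⁻¹ * g * b) := by group
      _ = 1 * (g⁻¹ * b⁻¹ * g * b) := by rw [this]
      _ = g⁻¹ * b⁻¹ * g * b := one_mul _

end YonahaAux

theorem yonaha {G : Type*} [Group G] [Finite G]
    (hmeta : IsMulCommutative (commutator G))
    (hz : Subgroup.center G ⊓ commutator G = ⊥) :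
    HasComplementIn (commutator G) ⊤ ∧
    ∀ K₁ K₂ : Subgroup G, IsComplementOfIn K₁ (commutator G) ⊤ →
      IsComplementOfIn K₂ (commutator G) ⊤ →
      ∃ g : G, Subgroup.map (MulAut.conj g).toMonoidHom K₁ = K₂ := by
  classical
  haveI := hmeta
  have hAn : (commutator G).Normal := Subgroup.commutator_normal ⊤ ⊤
  set nA := Nat.card ↥(commutator G) with hnA
  have hnA0 : nA ≠ 0 := Nat.card_pos.ne'
  set s := nA.primeFactors with hs
  have horder : ∀ x ∈ commutator G, x ^ nA = 1 := by
    intro x hx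
    exact orderOf_dvd_iff_pow_eq_one.mp ((commutator G).orderOf_dvd_natCard hx)
  -- choice of exponents
  have hexists_e : ∀ p ∈ s, ∃ ep : ℕ, nA ∣ ep * p ^ (nA.factorization p) ∧
      ep ≡ 1 [MOD p ^ (nA.factorization p)] ∧ (ordCompl[p] nA) ∣ ep := by
    intro p hps
    have hp : p.Prime := Nat.prime_of_mem_primeFactors hps
    have hpA : p ∣ nA := Nat.dvd_of_mem_primeFactors hps
    have hP1 : 1 < p ^ nA.factorization p :=
      Nat.one_lt_pow (Nat.Prime.factorization_pos_of_dvd hp hnA0 hpA).ne' hp.one_lt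
    have hco : Nat.Coprime (ordCompl[p] nA) (p ^ nA.factorization p) :=
      Nat.Coprime.pow_right _ (Nat.coprime_ordCompl hp hnA0).symm
    obtain ⟨c, -, hc⟩ := Nat.exists_mul_mod_eq_one_of_coprime hco hP1
    refine ⟨ordCompl[p] nA * c, ⟨c, ?_⟩, ?_, ⟨c, rfl⟩⟩
    · have hPM : p ^ nA.factorization p * (nA / p ^ nA.factorization p) = nA :=
        Nat.ordProj_mul_ordCompl_eq_self nA p
      calc ordCompl[p] nA * c * p ^ nA.factorization p
          = (p ^ nA.factorization p * (nA / p ^ nA.factorization p)) * c := by ring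
        _ = nA * c := by rw [hPM]
    · show ordCompl[p] nA * c % p ^ nA.factorization p = 1 % p ^ nA.factorization p
      rw [hc, Nat.mod_eq_of_lt hP1]
  choose! e he1 he2 he3 using hexists_e
  -- CRT
  have hsum : (∑ p ∈ s, e p) ≡ 1 [MOD nA] := by
    have hdvd : ∀ q ∈ s, ((q ^ (nA.factorization q) : ℕ) : ℤ) ∣
        ((∑ p ∈ s, e p : ℕ) : ℤ) - 1 := by
      intro q hqs
      have hq : q.Prime := Nat.prime_of_mem_primeFactors hqs
      have h1 : (∑ p ∈ s, e p) = e q + ∑ p ∈ s.erase q, e p :=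
        (Finset.add_sum_erase s e hqs).symm
      have h2 : ((q ^ (nA.factorization q) : ℕ) : ℤ) ∣ ((e q : ℕ) : ℤ) - 1 := by
        have h3 := (Nat.modEq_iff_dvd).mp (he2 q hqs)
        exact (dvd_sub_comm).mp h3
      have h3 : ∀ p ∈ s.erase q, ((q ^ (nA.factorization q) : ℕ) : ℤ) ∣ ((e p : ℕ) : ℤ) := by
        intro p hp'
        have hpq : p ≠ q := (Finset.mem_erase.mp hp').1
        have hps : p ∈ s := (Finset.mem_erase.mp hp').2
        have hp : p.Prime := Nat.prime_of_mem_primeFactors hps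
        have hd1 : q ^ nA.factorization q ∣ nA := Nat.ordProj_dvd nA q
        have hco : Nat.Coprime (q ^ nA.factorization q) (p ^ nA.factorization p) :=
          Nat.Coprime.pow _ _ ((Nat.coprime_primes hq hp).mpr (Ne.symm hpq))
        have hd2 : q ^ nA.factorization q ∣ p ^ nA.factorization p * ordCompl[p] nA := by
          rw [Nat.ordProj_mul_ordCompl_eq_self]
          exact hd1
        have hd3 : q ^ nA.factorization q ∣ ordCompl[p] nA :=
          (Nat.Coprime.dvd_of_dvd_mul_left hco hd2)
        exact Int.natCast_dvd_natCast.mpr (hd3.trans (he3 p hps))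
      rw [h1]
      push_cast
      have h4 : ((e q : ℤ) + ∑ p ∈ s.erase q, (e p : ℤ)) - 1 =
          ((e q : ℤ) - 1) + ∑ p ∈ s.erase q, (e p : ℤ) := by ring
      rw [h4]
      refine dvd_add ?_ (Finset.dvd_sum ?_)
      · exact_mod_cast h2
      · intro p hp'
        exact_mod_cast h3 p hp'
    have hprod : ∏ q ∈ s, q ^ nA.factorization q = nA := by
      have h5 := Nat.factorization_prod_pow_eq_self hnA0
      rw [Finsupp.prod] at h5
      rw [hs, ← Nat.support_factorization]
      exact h5
    have hcopr : (↑s : Set ℕ).Pairwise fun a b =>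
        IsCoprime ((a ^ nA.factorization a : ℕ) : ℤ) ((b ^ nA.factorization b : ℕ) : ℤ) := by
      intro a ha b hb hab
      apply Nat.Coprime.isCoprime
      exact Nat.Coprime.pow _ _ ((Nat.coprime_primes
        (Nat.prime_of_mem_primeFactors ha) (Nat.prime_of_mem_primeFactors hb)).mpr hab)
    have hfinal : ((nA : ℕ) : ℤ) ∣ ((∑ p ∈ s, e p : ℕ) : ℤ) - 1 := by
      have h6 := Finset.prod_dvd_of_coprime hcopr hdvd
      have h7 : (∏ q ∈ s, ((q ^ nA.factorization q : ℕ) : ℤ)) = ((nA : ℕ) : ℤ) := by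
        rw [← Nat.cast_prod, hprod]
      rwa [h7] at h6
    exact (Nat.modEq_iff_dvd).mpr ((dvd_sub_comm).mp hfinal)
  -- existence of the per-prime crossed homs
  have hex : ∀ p ∈ s, ∃ f : G → G, YonahaAux.IsCocycle f ⊤ ∧
      (∀ g : G, f g ∈ commutator G) ∧ (∀ a ∈ commutator G, f a = a ^ (e p)) := by
    intro p hps
    have hp : p.Prime := Nat.prime_of_mem_primeFactors hps
    have hpA : p ∣ nA := Nat.dvd_of_mem_primeFactors hps
    obtain ⟨f, hcoc, hval, hid⟩ :=
      (YonahaAux.key_p hmeta hz p hp hpA).1 (e p) (he1 p hps) (he2 p hps)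
    exact ⟨f, hcoc, fun g => (hval g).1, hid⟩
  choose! F hF1 hF2 hF3 using hex
  set Fc : ℕ → G → ↥(commutator G) := fun p g =>
    if hp : p ∈ s then ⟨F p g, hF2 p hp g⟩ else 1 with hFcdef
  have hFccoc : ∀ (p : ℕ) (x y : G),
      Fc p (x * y) = (MulAut.conjNormal (y⁻¹ : G)) (Fc p x) * Fc p y := by
    intro p x y
    by_cases hp : p ∈ s
    · simp only [hFcdef, dif_pos hp]
      apply Subtype.ext
      push_cast
      simp only [MulAut.conjNormal_apply]
      rw [hF1 p hp x (Subgroup.mem_top x) y (Subgroup.mem_top y)]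
      group
    · simp only [hFcdef, dif_neg hp]
      simp
  set f : G → G := fun g => ((∏ p ∈ s, Fc p g : ↥(commutator G)) : G) with hfdef
  have hfcoc : YonahaAux.IsCocycle f ⊤ := by
    intro x _ y _
    have key : (∏ p ∈ s, Fc p (x * y)) =
        (MulAut.conjNormal (y⁻¹ : G)) (∏ p ∈ s, Fc p x) * (∏ p ∈ s, Fc p y) := by
      calc (∏ p ∈ s, Fc p (x * y))
          = ∏ p ∈ s, ((MulAut.conjNormal (y⁻¹ : G)) (Fc p x) * Fc p y) :=
            Finset.prod_congr rfl (fun p _ => hFccoc p x y)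
        _ = (∏ p ∈ s, (MulAut.conjNormal (y⁻¹ : G)) (Fc p x)) * (∏ p ∈ s, Fc p y) :=
            Finset.prod_mul_distrib
        _ = (MulAut.conjNormal (y⁻¹ : G)) (∏ p ∈ s, Fc p x) * (∏ p ∈ s, Fc p y) := by
            rw [map_prod]
    show ((∏ p ∈ s, Fc p (x * y) : ↥(commutator G)) : G) = _
    rw [key]
    push_cast
    simp only [MulAut.conjNormal_apply, hfdef]
    group
  have hfval : ∀ w ∈ (⊤ : Subgroup G), f w ∈ commutator G := fun w _ =>
    (∏ p ∈ s, Fc p w).2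
  have hfA : ∀ a ∈ commutator G, f a = a := by
    intro a ha
    have h9 : ∀ p ∈ s, Fc p a = (⟨a, ha⟩ : ↥(commutator G)) ^ e p := by
      intro p hp
      simp only [hFcdef, dif_pos hp]
      apply Subtype.ext
      push_cast
      exact hF3 p hp a ha
    show ((∏ p ∈ s, Fc p a : ↥(commutator G)) : G) = a
    rw [Finset.prod_congr rfl h9, Finset.prod_pow_eq_pow_sum]
    have h10 : (⟨a, ha⟩ : ↥(commutator G)) ^ (∑ p ∈ s, e p) = ⟨a, ha⟩ ^ 1 := by
      rw [pow_eq_pow_iff_modEq]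
      apply hsum.of_dvd
      rw [← Subgroup.orderOf_coe]
      exact (commutator G).orderOf_dvd_natCard ha
    rw [h10, pow_one]
  obtain ⟨K, hKc, _⟩ := YonahaAux.complement_of_fun hmeta (le_refl (commutator G)) le_top
    f hfcoc hfval hfA
  refine ⟨⟨K, hKc⟩, ?_⟩
  -- conjugacy
  intro K₁ K₂ hK₁ hK₂
  obtain ⟨f₁, hf₁coc, hf₁val, hf₁id, hK₁mem⟩ :=
    YonahaAux.exists_fun_of_complement hmeta le_rfl hAn hK₁
  obtain ⟨f₂, hf₂coc, hf₂val, hf₂id, hK₂mem⟩ :=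
    YonahaAux.exists_fun_of_complement hmeta le_rfl hAn hK₂
  set d : G → G := fun g => f₂ g * (f₁ g)⁻¹ with hddef
  have hdcoc : YonahaAux.IsCocycle d ⊤ :=
    YonahaAux.cocycle_mul hmeta hf₂coc
      (YonahaAux.cocycle_inv_fun hmeta hf₁coc hf₁val)
      hf₂val (fun w hw => (commutator G).inv_mem (hf₁val w hw))
  have hdval : ∀ g : G, d g ∈ commutator G := fun g =>
    (commutator G).mul_mem (hf₂val g (Subgroup.mem_top g))
      ((commutator G).inv_mem (hf₁val g (Subgroup.mem_top g)))
  have hdA : ∀ a ∈ commutator G, d a = 1 := by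
    intro a ha
    show f₂ a * (f₁ a)⁻¹ = 1
    rw [hf₂id a ha, hf₁id a ha]
    group
  have hconj : ∀ p ∈ s, ∃ b ∈ commutator G, ∀ g : G,
      (d g) ^ (e p) = g⁻¹ * b⁻¹ * g * b := by
    intro p hps
    have hp : p.Prime := Nat.prime_of_mem_primeFactors hps
    have hpA : p ∣ nA := Nat.dvd_of_mem_primeFactors hps
    have hdpcoc : YonahaAux.IsCocycle (fun g => (d g) ^ (e p)) ⊤ :=
      YonahaAux.cocycle_pow hmeta hdcoc (fun w _ => hdval w) (e p)
    have hdpval : ∀ g : G, (d g) ^ (e p) ∈ commutator G ∧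
        ((d g) ^ (e p)) ^ (p ^ (nA.factorization p)) = 1 := by
      intro g
      refine ⟨Subgroup.pow_mem _ (hdval g) _, ?_⟩
      rw [← pow_mul]
      obtain ⟨t, ht⟩ := he1 p hps
      rw [ht, pow_mul, horder _ (hdval g), one_pow]
    have hdpA : ∀ a ∈ commutator G, (d a) ^ (e p) = 1 := by
      intro a ha
      rw [hdA a ha, one_pow]
    exact (YonahaAux.key_p hmeta hz p hp hpA).2 _ hdpcoc hdpval hdpA
  choose! bb hbb1 hbb2 using hconj
  set bc : ℕ → ↥(commutator G) := fun p =>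
    if hp : p ∈ s then ⟨bb p, hbb1 p hp⟩ else 1 with hbcdef
  set b : G := ((∏ p ∈ s, bc p : ↥(commutator G)) : G) with hbdef
  have hbA : b ∈ commutator G := (∏ p ∈ s, bc p).2
  -- the inner-derivation evaluation as a monoid hom in the A-variable
  have hμ : ∀ g : G, ∃ μ : ↥(commutator G) →* ↥(commutator G),
      ∀ u : ↥(commutator G), ((μ u : ↥(commutator G)) : G) = g⁻¹ * (↑u)⁻¹ * g * ↑u := by
    intro g
    have hmem : ∀ u : ↥(commutator G), g⁻¹ * (↑u)⁻¹ * g * (↑u : G) ∈ commutator G :=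
      fun u => (commutator G).mul_mem
        (YonahaAux.aconj hAn ((commutator G).inv_mem u.2) g) u.2
    refine ⟨{ toFun := fun u => ⟨g⁻¹ * (↑u)⁻¹ * g * ↑u, hmem u⟩
              map_one' := by apply Subtype.ext; push_cast; group
              map_mul' := ?_ }, fun u => rfl⟩
    intro u v
    apply Subtype.ext
    push_cast
    have hc1 : (↑u : G) * (g⁻¹ * (↑v)⁻¹ * g) = (g⁻¹ * (↑v)⁻¹ * g) * ↑u :=
      YonahaAux.acomm hmeta u.2
        (YonahaAux.aconj hAn ((commutator G).inv_mem v.2) g)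
    have hc2 : (g⁻¹ * (↑u)⁻¹ * g) * (g⁻¹ * (↑v)⁻¹ * g) =
        (g⁻¹ * (↑v)⁻¹ * g) * (g⁻¹ * (↑u)⁻¹ * g) :=
      YonahaAux.acomm hmeta
        (YonahaAux.aconj hAn ((commutator G).inv_mem u.2) g)
        (YonahaAux.aconj hAn ((commutator G).inv_mem v.2) g)
    calc g⁻¹ * (↑u * ↑v)⁻¹ * g * (↑u * ↑v)
        = (g⁻¹ * (↑v)⁻¹ * g) * (g⁻¹ * (↑u)⁻¹ * g) * ↑u * ↑v := by group
      _ = (g⁻¹ * (↑u)⁻¹ * g) * (g⁻¹ * (↑v)⁻¹ * g) * ↑u * ↑v := by rw [← hc2]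
      _ = (g⁻¹ * (↑u)⁻¹ * g) * ((g⁻¹ * (↑v)⁻¹ * g) * ↑u) * ↑v := by group
      _ = (g⁻¹ * (↑u)⁻¹ * g) * (↑u * (g⁻¹ * (↑v)⁻¹ * g)) * ↑v := by rw [← hc1]
      _ = g⁻¹ * (↑u)⁻¹ * g * ↑u * (g⁻¹ * (↑v)⁻¹ * g * ↑v) := by group
  have hdb : ∀ w ∈ (⊤ : Subgroup G), f₂ w = f₁ w * (w⁻¹ * b⁻¹ * w * b) := by
    intro w _
    obtain ⟨μ, hμw⟩ := hμ w
    have h1 : d w = w⁻¹ * b⁻¹ * w * b := by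
      set dd : ↥(commutator G) := ⟨d w, hdval w⟩ with hdd
      have e2 : dd ^ (∑ p ∈ s, e p) = dd := by
        have h10 : dd ^ (∑ p ∈ s, e p) = dd ^ 1 := by
          rw [pow_eq_pow_iff_modEq]
          apply hsum.of_dvd
          rw [← Subgroup.orderOf_coe]
          exact (commutator G).orderOf_dvd_natCard (hdval w)
        rw [h10, pow_one]
      have e3 : ∀ p ∈ s, dd ^ (e p) = μ (bc p) := by
        intro p hps
        apply Subtype.ext
        rw [hμw]
        simp only [hbcdef, dif_pos hps]
        push_cast
        exact hbb2 p hps w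
      have e4 : dd = μ (∏ p ∈ s, bc p) := by
        rw [map_prod, ← Finset.prod_congr rfl e3, Finset.prod_pow_eq_pow_sum, e2]
      have := congrArg (fun z : ↥(commutator G) => (z : G)) e4
      rw [hμw] at this
      exact this
    have h2 : f₂ w * (f₁ w)⁻¹ = w⁻¹ * b⁻¹ * w * b := h1
    have hcomm : (w⁻¹ * b⁻¹ * w * b) * f₁ w = f₁ w * (w⁻¹ * b⁻¹ * w * b) :=
      YonahaAux.acomm hmeta
        ((commutator G).mul_mem
          (YonahaAux.aconj hAn ((commutator G).inv_mem hbA) w) hbA)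
        (hf₁val w (Subgroup.mem_top w))
    calc f₂ w = (f₂ w * (f₁ w)⁻¹) * f₁ w := by group
      _ = (w⁻¹ * b⁻¹ * w * b) * f₁ w := by rw [h2]
      _ = f₁ w * (w⁻¹ * b⁻¹ * w * b) := hcomm
  exact ⟨b,
    YonahaAux.map_conj_ker hmeta le_rfl hAn le_top f₁ f₂ hf₁coc hf₁id hK₁mem hK₂mem hbA hdb⟩
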